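/- Let L be a Lie algebra over a field of characteristic 0 (or with nilpotency conditions as appropriate) and D a nilpotent δ-derivation of L. Then exp(D) and exp(δD) are well-defined bijective linear maps and exp(D)([x,y]) = [exp(δD)(x), exp(δD)(y)] for all x,y ∈ L; in particular exp(δD) is a quasiautomorphism of L. -/

import Mathlib

open Finset

section aux
variable {K L : Type*} [Field K] [CharZero K] [LieRing L] [LieAlgebra K L]

lemma exp_nilpotent_bijective (n : ℕ) (A : Module.End K L) (hA : A ^ n = 0) :
    Function.Bijective
      (∑ i ∈ Finset.range n, ((i.factorial : K)⁻¹) • A ^ i : Module.End K L) := by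
  rcases Nat.eq_zero_or_pos n with rfl | hn
  · have h1 : (1 : Module.End K L) = 0 := by simpa using hA
    have hsub : Subsingleton L := by
      refine ⟨fun a b => ?_⟩
      have ha := LinearMap.congr_fun h1 a
      have hb := LinearMap.congr_fun h1 b
      simp only [Module.End.one_apply, LinearMap.zero_apply] at ha hb
      rw [ha, hb]
    simp only [Finset.range_zero, Finset.sum_empty]
    exact ⟨fun a b _ => Subsingleton.elim a b, fun b => ⟨b, Subsingleton.elim _ _⟩⟩
  · set N : Module.End K L := ∑ i ∈ Finset.Ico 1 n, ((i.factorial : K)⁻¹) • A ^ i with hN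
    have hsplit : (∑ i ∈ Finset.range n, ((i.factorial : K)⁻¹) • A ^ i : Module.End K L)
        = 1 + N := by
      rw [Finset.range_eq_Ico, Finset.sum_eq_sum_Ico_succ_bot hn]
      simp [hN]
    set P : Module.End K L := ∑ i ∈ Finset.Ico 1 n, ((i.factorial : K)⁻¹) • A ^ (i - 1) with hP
    have hNP : N = A * P := by
      rw [hP, Finset.mul_sum, hN]
      refine Finset.sum_congr rfl fun i hi => ?_
      rw [Finset.mem_Ico] at hi
      rw [mul_smul_comm, ← pow_succ', Nat.sub_add_cancel hi.1]
    have hcomm : Commute A P := by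
      refine Commute.sum_right _ _ _ fun i _ => ?_
      exact (Commute.pow_right (Commute.refl A) _).smul_right _
    have hNnil : IsNilpotent N := by
      refine ⟨n, ?_⟩
      rw [hNP, hcomm.mul_pow, hA, zero_mul]
    rw [hsplit, ← Module.End.isUnit_iff]
    exact hNnil.isUnit_one_add


/-- Leibniz rule for iterates of a δ-derivation -/
lemma delta_deriv_pow (δ : K) (D : Module.End K L)
    (hD : ∀ x y : L, D ⁅x, y⁆ = δ • ⁅D x, y⁆ + δ • ⁅x, D y⁆) (k : ℕ) (x y : L) :
    (D ^ k) ⁅x, y⁆ =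
      ∑ i ∈ Finset.range (k + 1),
        (δ ^ k * (k.choose i : K)) • ⁅(D ^ i) x, (D ^ (k - i)) y⁆ := by
  induction k with
  | zero => simp
  | succ k IH =>
    have hmul : ∀ (m : ℕ) (z : L), D ((D ^ m) z) = (D ^ (m+1)) z := fun m z => by
      rw [pow_succ', Module.End.mul_apply]
    rw [← hmul, IH, map_sum]
    have step : ∀ i ∈ Finset.range (k + 1),
        D ((δ ^ k * (k.choose i : K)) • ⁅(D ^ i) x, (D ^ (k - i)) y⁆) =
        (δ ^ (k+1) * (k.choose i : K)) • ⁅(D ^ (i+1)) x, (D ^ (k - i)) y⁆ +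
        (δ ^ (k+1) * (k.choose i : K)) • ⁅(D ^ i) x, (D ^ (k + 1 - i)) y⁆ := by
      intro i hi
      rw [Finset.mem_range, Nat.lt_succ_iff] at hi
      have hki : k + 1 - i = (k - i) + 1 := by omega
      rw [map_smul, hD, smul_add, smul_smul, smul_smul, hmul, hki, hmul,
        show (δ ^ k * (k.choose i : K)) * δ = δ ^ (k+1) * (k.choose i : K) by ring]
    rw [Finset.sum_congr rfl step, Finset.sum_add_distrib]
    -- rewrite the RHS
    rw [Finset.sum_range_succ'
      (fun i => (δ ^ (k+1) * ((k+1).choose i : K)) • ⁅(D ^ i) x, (D ^ (k + 1 - i)) y⁆) (k+1)]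
    simp only [Nat.choose_succ_succ, Nat.cast_add, mul_add, add_smul,
      Finset.sum_add_distrib, Nat.succ_sub_succ_eq_sub, Nat.choose_zero_right,
      Nat.cast_one, mul_one, Nat.sub_zero]
    -- rewrite second LHS sum
    rw [Finset.sum_range_succ'
      (fun i => (δ ^ (k+1) * (k.choose i : K)) • ⁅(D ^ i) x, (D ^ (k + 1 - i)) y⁆) k]
    simp only [Nat.succ_sub_succ_eq_sub, Nat.choose_zero_right, Nat.cast_one, mul_one,
      Nat.sub_zero]
    -- drop the vanishing top term of the extra sum on the RHS
    rw [Finset.sum_range_succ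
      (fun i => (δ ^ (k+1) * (k.choose (i+1) : K)) • ⁅(D ^ (i+1)) x, (D ^ (k - i)) y⁆) k]
    simp only [Nat.choose_succ_self, Nat.cast_zero, mul_zero, zero_smul, add_zero]
    abel



lemma sum_lie' (s : Finset ℕ) (f : ℕ → L) (y : L) :
    ⁅∑ i ∈ s, f i, y⁆ = ∑ i ∈ s, ⁅f i, y⁆ := by
  induction s using Finset.cons_induction with
  | empty => simp
  | cons a s ha ih => rw [Finset.sum_cons, Finset.sum_cons, add_lie, ih]

lemma lie_sum' (s : Finset ℕ) (f : ℕ → L) (x : L) :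
    ⁅x, ∑ i ∈ s, f i⁆ = ∑ i ∈ s, ⁅x, f i⁆ := by
  induction s using Finset.cons_induction with
  | empty => simp
  | cons a s ha ih => rw [Finset.sum_cons, Finset.sum_cons, lie_add, ih]

lemma exp_bracket (δ : K) (D : Module.End K L)
    (hpow : ∀ x y : L, ∀ k, (D ^ k) ⁅x, y⁆ =
      ∑ i ∈ Finset.range (k + 1),
        (δ ^ k * (k.choose i : K)) • ⁅(D ^ i) x, (D ^ (k - i)) y⁆)
    (n : ℕ) (hn : D ^ n = 0) (x y : L) :
    (∑ i ∈ Finset.range n, ((i.factorial : K)⁻¹) • D ^ i : Module.End K L) ⁅x, y⁆ =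
      ⁅(∑ i ∈ Finset.range n, ((i.factorial : K)⁻¹) • (δ • D) ^ i : Module.End K L) x,
       (∑ i ∈ Finset.range n, ((i.factorial : K)⁻¹) • (δ • D) ^ i : Module.End K L) y⁆ := by
  have hzero : ∀ m, n ≤ m → (D ^ m : Module.End K L) = 0 := fun m hm =>
    pow_eq_zero_of_le hm hn
  have hsub : Finset.range n ⊆ Finset.range (2 * n) :=
    Finset.range_subset_range.2 (by omega)
  set g : ℕ → ℕ → L := fun i j =>
    (δ ^ (i + j) * ((i.factorial : K)⁻¹ * (j.factorial : K)⁻¹)) • ⁅(D ^ i) x, (D ^ j) y⁆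
    with hg
  have hgz : ∀ i j : ℕ, n ≤ i ∨ n ≤ j → g i j = 0 := by
    rintro i j (h | h) <;> simp [hg, hzero _ h]
  -- RHS equals double sum of g over range n × range n
  have hRHS : ⁅(∑ i ∈ Finset.range n, ((i.factorial : K)⁻¹) • (δ • D) ^ i : Module.End K L) x,
       (∑ i ∈ Finset.range n, ((i.factorial : K)⁻¹) • (δ • D) ^ i : Module.End K L) y⁆
      = ∑ i ∈ Finset.range n, ∑ j ∈ Finset.range n, g i j := by
    rw [LinearMap.sum_apply, LinearMap.sum_apply, sum_lie']
    refine Finset.sum_congr rfl fun i _ => ?_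
    rw [lie_sum']
    refine Finset.sum_congr rfl fun j _ => ?_
    simp only [LinearMap.smul_apply, smul_pow, smul_lie, lie_smul, smul_smul, hg]
    congr 1
    rw [pow_add]
    ring
  rw [hRHS]
  -- extend double sum to range (2n)
  have hext : ∑ i ∈ Finset.range n, ∑ j ∈ Finset.range n, g i j
      = ∑ i ∈ Finset.range (2 * n), ∑ j ∈ Finset.range (2 * n), g i j :=
    calc ∑ i ∈ Finset.range n, ∑ j ∈ Finset.range n, g i j
        = ∑ i ∈ Finset.range n, ∑ j ∈ Finset.range (2 * n), g i j :=
          Finset.sum_congr rfl fun i _ => Finset.sum_subset hsub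
            (fun j _ hj => hgz i j (Or.inr (by simpa using hj)))
      _ = ∑ i ∈ Finset.range (2 * n), ∑ j ∈ Finset.range (2 * n), g i j :=
          Finset.sum_subset hsub (fun i _ hi =>
            Finset.sum_eq_zero fun j _ => hgz i j (Or.inl (by simpa using hi)))
  rw [hext]
  -- LHS: extend to range (2n)
  rw [LinearMap.sum_apply,
    Finset.sum_subset hsub (fun k _ hk => by
      rw [Finset.mem_range, not_lt] at hk
      simp [hzero k hk])]
  have hterm : ∀ k, ((((k.factorial : K))⁻¹ • D ^ k : Module.End K L)) ⁅x, y⁆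
      = ∑ i ∈ Finset.range (k + 1), g i (k - i) := by
    intro k
    rw [LinearMap.smul_apply, hpow x y k, Finset.smul_sum]
    refine Finset.sum_congr rfl fun i hi => ?_
    rw [Finset.mem_range, Nat.lt_succ_iff] at hi
    rw [smul_smul, hg]
    congr 1
    have hk : i + (k - i) = k := by omega
    rw [hk, Nat.cast_choose K hi]
    have h1 : (i.factorial : K) ≠ 0 := Nat.cast_ne_zero.2 i.factorial_ne_zero
    have h2 : ((k - i).factorial : K) ≠ 0 := Nat.cast_ne_zero.2 (k - i).factorial_ne_zero
    have h3 : (k.factorial : K) ≠ 0 := Nat.cast_ne_zero.2 k.factorial_ne_zero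
    field_simp
    try ring
  rw [Finset.sum_congr rfl fun k _ => hterm k, Finset.sum_range_diag_flip]
  refine Finset.sum_congr rfl fun m hm => ?_
  rw [Finset.mem_range] at hm
  refine Finset.sum_subset (Finset.range_subset_range.2 (by omega)) fun k _ hk => ?_
  rw [Finset.mem_range, not_lt] at hk
  exact hgz m k (by omega)


end aux



/-- For a nilpotent δ-derivation `D` of a Lie algebra over a field of
characteristic 0, the exponentials `exp D` and `exp (δ•D)` are well-defined
bijective linear maps with `exp D ⁅x,y⁆ = ⁅exp (δ•D) x, exp (δ•D) y⁆`; in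
particular `exp (δ•D)` is a quasiautomorphism. -/
theorem exp_of_nilpotent_delta_derivation (K L : Type*) [Field K] [CharZero K]
    [LieRing L] [LieAlgebra K L] (δ : K) (D : Module.End K L)
    (hD : ∀ x y : L, D ⁅x, y⁆ = δ • ⁅D x, y⁆ + δ • ⁅x, D y⁆)
    (n : ℕ) (hn : D ^ n = 0) :
    Function.Bijective
      (∑ i ∈ Finset.range n, ((i.factorial : K)⁻¹) • D ^ i :
        Module.End K L) ∧
    Function.Bijective
      (∑ i ∈ Finset.range n, ((i.factorial : K)⁻¹) • (δ • D) ^ i :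
        Module.End K L) ∧
    (∀ x y : L,
      (∑ i ∈ Finset.range n, ((i.factorial : K)⁻¹) • D ^ i :
        Module.End K L) ⁅x, y⁆ =
      ⁅(∑ i ∈ Finset.range n, ((i.factorial : K)⁻¹) • (δ • D) ^ i :
          Module.End K L) x,
       (∑ i ∈ Finset.range n, ((i.factorial : K)⁻¹) • (δ • D) ^ i :
          Module.End K L) y⁆) ∧
    ∃ ψ : Module.End K L, Function.Bijective ψ ∧
      ∀ x y : L, ψ ⁅x, y⁆ =
        ⁅(∑ i ∈ Finset.range n, ((i.factorial : K)⁻¹) • (δ • D) ^ i :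
            Module.End K L) x,
         (∑ i ∈ Finset.range n, ((i.factorial : K)⁻¹) • (δ • D) ^ i :
            Module.End K L) y⁆ := by
  refine ⟨exp_nilpotent_bijective n D hn,
    exp_nilpotent_bijective n (δ • D) (by rw [smul_pow, hn, smul_zero]),
    fun x y => exp_bracket δ D (fun x y k => delta_deriv_pow δ D hD k x y) n hn x y,
    ⟨(∑ i ∈ Finset.range n, ((i.factorial : K)⁻¹) • D ^ i : Module.End K L),
      exp_nilpotent_bijective n D hn,
      fun x y => exp_bracket δ D (fun x y k => delta_deriv_pow δ D hD k x y) n hn x y⟩⟩
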